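/- Let r be a rational number with 0 < r < 1 such that the cyclic rational monoid S_r = ⟨r^n : n ∈ ℕ₀⟩ is atomic (equivalently, the numerator of r is greater than 1). Then Δ(S_r) ⊆ {d(r) − n(r)}, where n(r), d(r) are the numerator and denominator of r in lowest terms. -/

import Mathlib

open scoped NNRat ENNReal

/-- The set of atoms of a Puiseux monoid (additive submonoid of `ℚ≥0`). -/
def PMatoms (M : AddSubmonoid ℚ≥0) : Set ℚ≥0 :=
  {a | a ∈ M ∧ a ≠ 0 ∧ ∀ y ∈ M, ∀ z ∈ M, y ≠ 0 → z ≠ 0 → a ≠ y + z}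

/-- A Puiseux monoid is atomic if it is generated by its atoms. -/
def PMatomic (M : AddSubmonoid ℚ≥0) : Prop :=
  ∀ x ∈ M, x ∈ AddSubmonoid.closure (PMatoms M)

/-- The set of factorizations of `x` in `M`: multisets of atoms summing to `x`. -/
def PMfactorizations (M : AddSubmonoid ℚ≥0) (x : ℚ≥0) : Set (Multiset ℚ≥0) :=
  {s | (∀ a ∈ s, a ∈ PMatoms M) ∧ s.sum = x}

/-- The set of lengths of `x` in `M`. -/
def PMlengths (M : AddSubmonoid ℚ≥0) (x : ℚ≥0) : Set ℕ :=
  Multiset.card '' PMfactorizations M x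

/-- The elasticity of an element: `sup L(x) / inf L(x)` in `ℝ≥0∞`, `1` for `x = 0`. -/
noncomputable def PMelasticityOf (M : AddSubmonoid ℚ≥0) (x : ℚ≥0) : ℝ≥0∞ :=
  if x = 0 then 1
  else sSup ((fun n : ℕ => (n : ℝ≥0∞)) '' PMlengths M x) /
       sInf ((fun n : ℕ => (n : ℝ≥0∞)) '' PMlengths M x)

/-- The elasticity of a Puiseux monoid. -/
noncomputable def PMelasticity (M : AddSubmonoid ℚ≥0) : ℝ≥0∞ :=
  ⨆ x ∈ M, PMelasticityOf M x

/-- The union of sets of lengths containing `n`. -/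
def PMunionOfLengths (M : AddSubmonoid ℚ≥0) (n : ℕ) : Set ℕ :=
  {m | ∃ x : ℚ≥0, n ∈ PMlengths M x ∧ m ∈ PMlengths M x}

/-- The `n`-th local elasticity `ρ_n(M) = sup U_n(M)` in `ℝ≥0∞`. -/
noncomputable def PMlocalElasticity (M : AddSubmonoid ℚ≥0) (n : ℕ) : ℝ≥0∞ :=
  sSup ((fun m : ℕ => (m : ℝ≥0∞)) '' PMunionOfLengths M n)

/-- The set of distances of an element `x` of `M`. -/
def PMdistances (M : AddSubmonoid ℚ≥0) (x : ℚ≥0) : Set ℕ :=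
  {d | 0 < d ∧ ∃ l ∈ PMlengths M x,
    PMlengths M x ∩ Set.Icc l (l + d) = {l, l + d}}

/-- The set of distances (delta set) of `M`. -/
def PMDelta (M : AddSubmonoid ℚ≥0) : Set ℕ :=
  ⋃ x ∈ {y : ℚ≥0 | y ∈ M ∧ y ≠ 0}, PMdistances M x

/-- `(Mi)` is an approximation of `M`: an increasing sequence of atomic submonoids
with union `M` and increasing sets of atoms. -/
def PMapprox (M : AddSubmonoid ℚ≥0) (Mi : ℕ → AddSubmonoid ℚ≥0) : Prop :=
  (∀ i, Mi i ≤ Mi (i + 1)) ∧ (∀ i, PMatomic (Mi i)) ∧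
  (∀ i, PMatoms (Mi i) ⊆ PMatoms (Mi (i + 1))) ∧
  (∀ x, x ∈ M ↔ ∃ i, x ∈ Mi i)

namespace Stmt13Aux


variable {r : ℚ≥0}

lemma mul_den (h0 : 0 < r) : r * (r.den : ℚ≥0) = (r.num : ℚ≥0) := by
  nth_rewrite 1 [← NNRat.num_div_den r]; field_simp

lemma den_cast_ne : ((r.den : ℚ≥0)) ≠ 0 := by exact_mod_cast r.den_ne_zero

lemma pow_le_pow_iff (h0 : 0 < r) (h1 : r < 1) {e k : ℕ} : r ^ e ≤ r ^ k ↔ k ≤ e := by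
  constructor
  · intro h
    by_contra hk
    exact absurd ((pow_lt_pow_iff_right_of_lt_one₀ h0 h1).2 (Nat.lt_of_not_le hk)) (not_lt.2 h)
  · intro h
    rcases Nat.eq_or_lt_of_le h with rfl | h
    · exact le_rfl
    · exact le_of_lt ((pow_lt_pow_iff_right_of_lt_one₀ h0 h1).2 h)

lemma num_lt_den (h0 : 0 < r) (h1 : r < 1) : r.num < r.den := by
  have hd : (0:ℚ≥0) < (r.den : ℚ≥0) := by
    exact_mod_cast r.den_pos
  have := mul_lt_mul_of_pos_right h1 hd
  rw [one_mul, mul_den h0] at this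
  exact_mod_cast this

lemma num_pos' (h0 : 0 < r) : 0 < r.num := NNRat.num_pos.2 h0

/-- Membership in S in terms of exponent multisets. -/
lemma memS {S : AddSubmonoid ℚ≥0}
    (hS : S = AddSubmonoid.closure {q : ℚ≥0 | ∃ n : ℕ, q = r ^ n}) {x : ℚ≥0} :
    x ∈ S ↔ ∃ E : Multiset ℕ, (E.map (fun e => r ^ e)).sum = x := by
  subst hS
  constructor
  · intro hx
    induction hx using AddSubmonoid.closure_induction with
    | mem y hy => obtain ⟨n, rfl⟩ := hy; exact ⟨{n}, by simp⟩
    | zero => exact ⟨0, by simp⟩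
    | add a b _ _ ha hb =>
      obtain ⟨s, rfl⟩ := ha; obtain ⟨t, rfl⟩ := hb
      exact ⟨s + t, by simp⟩
  · rintro ⟨E, rfl⟩
    refine AddSubmonoid.multiset_sum_mem _ _ ?_
    intro q hq
    rw [Multiset.mem_map] at hq
    obtain ⟨e, _, rfl⟩ := hq
    exact AddSubmonoid.subset_closure ⟨e, rfl⟩

lemma key_pt (h0 : 0 < r) {e K : ℕ} (he : e ≤ K) :
    ((r.num : ℚ≥0)) ^ e * ((r.den : ℚ≥0)) ^ (K - e) = ((r.den : ℚ≥0)) ^ K * r ^ e := by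
  have h : (r.num : ℚ≥0) = r * r.den := (mul_den h0).symm
  rw [h, mul_pow]
  have : ((r.den : ℚ≥0)) ^ K = ((r.den : ℚ≥0)) ^ e * ((r.den : ℚ≥0)) ^ (K - e) := by
    rw [← pow_add, Nat.add_sub_cancel' he]
  rw [this]; ring

lemma cast_sum (h0 : 0 < r) (E : Multiset ℕ) (K : ℕ) (hK : ∀ e ∈ E, e ≤ K) :
    (((E.map (fun e => r.num ^ e * r.den ^ (K - e))).sum : ℕ) : ℚ≥0)
      = ((r.den : ℚ≥0)) ^ K * (E.map (fun e => r ^ e)).sum := by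
  induction E using Multiset.induction with
  | empty => simp
  | cons a s ih =>
    have ha : a ≤ K := hK a (Multiset.mem_cons_self a s)
    have hs := ih (fun e he => hK e (Multiset.mem_cons_of_mem he))
    simp only [Multiset.map_cons, Multiset.sum_cons, Nat.cast_add, hs, Nat.cast_mul,
      Nat.cast_pow]
    rw [key_pt h0 ha]
    ring

lemma nat_eq (h0 : 0 < r) {E F : Multiset ℕ} (K : ℕ) (hE : ∀ e ∈ E, e ≤ K)
    (hF : ∀ e ∈ F, e ≤ K)
    (h : (E.map (fun e => r ^ e)).sum = (F.map (fun e => r ^ e)).sum) :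
    (E.map (fun e => r.num ^ e * r.den ^ (K - e))).sum
      = (F.map (fun e => r.num ^ e * r.den ^ (K - e))).sum := by
  have h1 := cast_sum h0 E K hE
  have h2 := cast_sum h0 F K hF
  rw [h] at h1
  have : (((E.map (fun e => r.num ^ e * r.den ^ (K - e))).sum : ℕ) : ℚ≥0)
      = (((F.map (fun e => r.num ^ e * r.den ^ (K - e))).sum : ℕ) : ℚ≥0) := by
    rw [h1, h2]
  exact_mod_cast this


variable {r : ℚ≥0}

lemma sum_modeq {m c : ℕ} (g : ℕ → ℕ) (E : Multiset ℕ) (h : ∀ e ∈ E, g e ≡ c [MOD m]) :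
    (E.map g).sum ≡ Multiset.card E * c [MOD m] := by
  induction E using Multiset.induction with
  | empty => simpa using Nat.ModEq.refl 0
  | cons a s ih =>
    simp only [Multiset.map_cons, Multiset.sum_cons, Multiset.card_cons]
    calc g a + (s.map g).sum ≡ c + Multiset.card s * c [MOD m] :=
          (h a (Multiset.mem_cons_self a s)).add
            (ih fun e he => h e (Multiset.mem_cons_of_mem he))
      _ = (Multiset.card s + 1) * c := by ring

lemma card_congr (h0 : 0 < r) (h1 : r < 1) {E F : Multiset ℕ}
    (h : (E.map (fun e => r ^ e)).sum = (F.map (fun e => r ^ e)).sum) :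
    Multiset.card E ≡ Multiset.card F [MOD r.den - r.num] := by
  set K := E.sup ⊔ F.sup with hKdef
  have hE : ∀ e ∈ E, e ≤ K := fun e he => le_trans (Multiset.le_sup he) le_sup_left
  have hF : ∀ e ∈ F, e ≤ K := fun e he => le_trans (Multiset.le_sup he) le_sup_right
  have hnat := nat_eq h0 K hE hF h
  have hd : r.num ≡ r.den [MOD r.den - r.num] :=
    (Nat.modEq_iff_dvd' (num_lt_den h0 h1).le).2 dvd_rfl
  have hterm : ∀ (G : Multiset ℕ), (∀ e ∈ G, e ≤ K) → ∀ e ∈ G,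
      r.num ^ e * r.den ^ (K - e) ≡ r.num ^ K [MOD r.den - r.num] := by
    intro G hG e he
    calc r.num ^ e * r.den ^ (K - e) ≡ r.num ^ e * r.num ^ (K - e) [MOD r.den - r.num] :=
          (Nat.ModEq.refl _).mul (hd.symm.pow _)
      _ = r.num ^ K := by rw [← pow_add, Nat.add_sub_cancel' (hG e he)]
  have h1' := sum_modeq _ E (hterm E hE)
  have h2' := sum_modeq _ F (hterm F hF)
  have hmul : Multiset.card E * r.num ^ K ≡ Multiset.card F * r.num ^ K [MOD r.den - r.num] :=
    h1'.symm.trans (by rw [hnat]; exact h2')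
  have hcop : Nat.Coprime (r.den - r.num) (r.num ^ K) :=
    (((Nat.coprime_sub_self_right (num_lt_den h0 h1).le).2 r.coprime_num_den).symm).pow_right K
  exact Nat.ModEq.cancel_right_of_coprime hcop hmul

lemma sum_pos (h0 : 0 < r) {E : Multiset ℕ} (hE : E ≠ 0) :
    0 < (E.map (fun e => r ^ e)).sum := by
  obtain ⟨e, he⟩ := Multiset.exists_mem_of_ne_zero hE
  have h1 : r ^ e ≤ (E.map (fun e => r ^ e)).sum :=
    Multiset.single_le_sum (fun x _ => zero_le) _ (Multiset.mem_map_of_mem _ he)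
  exact lt_of_lt_of_le (pow_pos h0 e) h1

lemma atom_is_pow {S : AddSubmonoid ℚ≥0}
    (hS : S = AddSubmonoid.closure {q : ℚ≥0 | ∃ n : ℕ, q = r ^ n})
    (h0 : 0 < r) {a : ℚ≥0} (ha : a ∈ PMatoms S) : ∃ k, a = r ^ k := by
  obtain ⟨haS, ha0, hsplit⟩ := ha
  obtain ⟨E, hsum⟩ := (memS hS).1 haS
  rcases E.empty_or_exists_mem with rfl | ⟨e, he⟩
  · simp at hsum; exact absurd hsum.symm ha0
  · obtain ⟨E', rfl⟩ := Multiset.exists_cons_of_mem he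
    rcases E'.empty_or_exists_mem with rfl | ⟨f, hf⟩
    · exact ⟨e, by simpa using hsum.symm⟩
    · exfalso
      refine hsplit (r ^ e) ((memS hS).2 ⟨{e}, by simp⟩)
        ((E'.map (fun e => r ^ e)).sum) ((memS hS).2 ⟨E', rfl⟩)
        (pow_ne_zero e h0.ne') (sum_pos h0 (by rintro rfl; simp at hf)).ne' ?_
      rw [← hsum]; simp

lemma num_two {S : AddSubmonoid ℚ≥0}
    (hS : S = AddSubmonoid.closure {q : ℚ≥0 | ∃ n : ℕ, q = r ^ n})
    (h0 : 0 < r) (h1 : r < 1) (hatomic : PMatomic S) : 2 ≤ r.num := by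
  by_contra hn
  have hn1 : r.num = 1 := by have := num_pos' h0; omega
  have hd2 : 2 ≤ r.den := by have := num_lt_den h0 h1; omega
  -- no atoms
  have hempty : PMatoms S = ∅ := by
    ext a
    simp only [Set.mem_empty_iff_false, iff_false]
    rintro ⟨haS, ha0, hsplit⟩
    obtain ⟨E, hsum⟩ := (memS hS).1 haS
    rcases E.empty_or_exists_mem with rfl | ⟨e, he⟩
    · simp at hsum; exact ha0 hsum.symm
    obtain ⟨E', rfl⟩ := Multiset.exists_cons_of_mem he
    have key : r ^ e = r ^ (e+1) + (r.den - 1) • r ^ (e+1) := by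
      have hnum1 : r * (r.den : ℚ≥0) = 1 := by rw [mul_den h0, hn1]; norm_num
      have : r ^ e = (r.den : ℚ≥0) * r ^ (e+1) := by
        rw [pow_succ,
          show (r.den : ℚ≥0) * (r ^ e * r) = (r * (r.den : ℚ≥0)) * r ^ e by ring, hnum1,
          one_mul]
      rw [this, ← nsmul_eq_mul]
      have hrd : r.den = 1 + (r.den - 1) := by omega
      calc r.den • r ^ (e+1) = (1 + (r.den - 1)) • r ^ (e+1) := by rw [← hrd]
        _ = r ^ (e+1) + (r.den - 1) • r ^ (e+1) := by rw [add_nsmul, one_nsmul]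
    refine hsplit (r ^ (e+1)) ((memS hS).2 ⟨{e+1}, by simp⟩)
      ((r.den - 1) • r ^ (e+1) + (E'.map (fun e => r ^ e)).sum)
      ?_ (pow_ne_zero _ h0.ne') ?_ ?_
    · exact S.add_mem (nsmul_mem ((memS hS).2 ⟨{e+1}, by simp⟩) _)
        ((memS hS).2 ⟨E', rfl⟩)
    · have hpos : 0 < (r.den - 1) • r ^ (e+1) := by
        rw [nsmul_eq_mul]
        have hc : (0:ℚ≥0) < ((r.den - 1 : ℕ) : ℚ≥0) := by
          exact_mod_cast (by omega : 0 < r.den - 1)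
        exact mul_pos hc (pow_pos h0 _)
      exact (lt_of_lt_of_le hpos le_self_add).ne'
    · rw [← hsum, Multiset.map_cons, Multiset.sum_cons, key, add_assoc]
  have h1S : (1 : ℚ≥0) ∈ S := (memS hS).2 ⟨{0}, by simp⟩
  have hmem := hatomic 1 h1S
  rw [hempty, AddSubmonoid.closure_empty, AddSubmonoid.mem_bot] at hmem
  exact one_ne_zero hmem


variable {r : ℚ≥0}

lemma pow_is_atom {S : AddSubmonoid ℚ≥0}
    (hS : S = AddSubmonoid.closure {q : ℚ≥0 | ∃ n : ℕ, q = r ^ n})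
    (h0 : 0 < r) (h1 : r < 1) (hn2 : 2 ≤ r.num) (k : ℕ) : r ^ k ∈ PMatoms S := by
  refine ⟨(memS hS).2 ⟨{k}, by simp⟩, pow_ne_zero k h0.ne', ?_⟩
  rintro y hy z hz hy0 hz0 heq
  obtain ⟨Ey, hEy⟩ := (memS hS).1 hy
  obtain ⟨Ez, hEz⟩ := (memS hS).1 hz
  have hEyne : Ey ≠ 0 := by rintro rfl; simp at hEy; exact hy0 hEy.symm
  have hEzne : Ez ≠ 0 := by rintro rfl; simp at hEz; exact hz0 hEz.symm
  set E := Ey + Ez with hE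
  have hsum : (E.map (fun e => r ^ e)).sum = r ^ k := by
    rw [hE, Multiset.map_add, Multiset.sum_add, hEy, hEz, heq]
  -- every exponent in E is ≥ k + 1
  have hge : ∀ e ∈ E, k + 1 ≤ e := by
    intro e he
    have hle : r ^ e ≤ r ^ k := by
      rw [← hsum]
      exact Multiset.single_le_sum (fun x _ => zero_le) _ (Multiset.mem_map_of_mem _ he)
    have hke : k ≤ e := (pow_le_pow_iff h0 h1).1 hle
    rcases Nat.eq_or_lt_of_le hke with heq' | h
    · exfalso
      subst heq'
      obtain ⟨E₁, hE₁eq⟩ := Multiset.exists_cons_of_mem he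
      have hE₁ : E₁ ≠ 0 := by
        rintro rfl
        have hcard : Multiset.card E = 1 := by rw [hE₁eq]; simp
        rw [hE, Multiset.card_add] at hcard
        have c1 : 0 < Multiset.card Ey := Multiset.card_pos.2 hEyne
        have c2 : 0 < Multiset.card Ez := Multiset.card_pos.2 hEzne
        omega
      have hsum2 : r ^ k + (E₁.map (fun e => r ^ e)).sum = r ^ k := by
        conv_rhs => rw [← hsum, hE₁eq]
        rw [Multiset.map_cons, Multiset.sum_cons]
      have h2 : (E₁.map (fun e => r ^ e)).sum = 0 := by
        have := hsum2.trans (add_zero (r ^ k)).symm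
        exact add_left_cancel this
      exact (sum_pos h0 hE₁).ne' h2
    · omega
  -- numeric contradiction
  set K := E.sup ⊔ k with hK
  have hEb : ∀ e ∈ E, e ≤ K := fun e he => le_trans (Multiset.le_sup he) le_sup_left
  have hkK : k ≤ K := le_sup_right
  have hnat : (E.map (fun e => r.num ^ e * r.den ^ (K - e))).sum
      = (({k} : Multiset ℕ).map (fun e => r.num ^ e * r.den ^ (K - e))).sum := by
    refine nat_eq h0 K hEb ?_ ?_
    · intro e he; rw [Multiset.mem_singleton] at he; subst he; exact hkK
    · rw [hsum]; simp
  have hdvd : r.num ^ (k+1) ∣ (E.map (fun e => r.num ^ e * r.den ^ (K - e))).sum := by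
    refine Multiset.dvd_sum ?_
    intro t ht
    rw [Multiset.mem_map] at ht
    obtain ⟨e, he, rfl⟩ := ht
    exact dvd_mul_of_dvd_left (pow_dvd_pow r.num (hge e he)) _
  rw [hnat] at hdvd
  simp only [Multiset.map_singleton, Multiset.sum_singleton] at hdvd
  have hdvd2 : r.num ^ k * r.num ∣ r.num ^ k * r.den ^ (K - k) := by
    rw [← pow_succ]; exact hdvd
  have hnpos : 0 < r.num ^ k := pow_pos (num_pos' h0) k
  have hdvd3 : r.num ∣ r.den ^ (K - k) := (mul_dvd_mul_iff_left hnpos.ne').1 hdvd2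
  have hcop : Nat.Coprime r.num (r.den ^ (K - k)) := r.coprime_num_den.pow_right _
  have h1' : r.num = 1 := hcop.eq_one_of_dvd hdvd3
  omega


variable {r : ℚ≥0}

lemma exists_exponents (h0 : 0 < r) (s : Multiset ℚ≥0) (hs : ∀ a ∈ s, ∃ k, a = r ^ k) :
    ∃ E : Multiset ℕ, s = E.map (fun e => r ^ e) := by
  induction s using Multiset.induction with
  | empty => exact ⟨0, rfl⟩
  | cons a t ih =>
    obtain ⟨k, hk⟩ := hs a (Multiset.mem_cons_self a t)
    obtain ⟨E, hE⟩ := ih (fun b hb => hs b (Multiset.mem_cons_of_mem hb))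
    exact ⟨k ::ₘ E, by rw [Multiset.map_cons, ← hE, ← hk]⟩

lemma lengths_iff {S : AddSubmonoid ℚ≥0}
    (hS : S = AddSubmonoid.closure {q : ℚ≥0 | ∃ n : ℕ, q = r ^ n})
    (h0 : 0 < r) (h1 : r < 1) (hn2 : 2 ≤ r.num) {x : ℚ≥0} {ℓ : ℕ} :
    ℓ ∈ PMlengths S x ↔
      ∃ E : Multiset ℕ, (E.map (fun e => r ^ e)).sum = x ∧ Multiset.card E = ℓ := by
  constructor
  · rintro ⟨s, ⟨hall, hsum⟩, hcard⟩
    obtain ⟨E, rfl⟩ := exists_exponents h0 s (fun a ha => atom_is_pow hS h0 (hall a ha))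
    exact ⟨E, hsum, by simpa using hcard⟩
  · rintro ⟨E, hsum, hcard⟩
    refine ⟨E.map (fun e => r ^ e), ⟨?_, hsum⟩, by simpa using hcard⟩
    intro a ha
    rw [Multiset.mem_map] at ha
    obtain ⟨e, _, rfl⟩ := ha
    exact pow_is_atom hS h0 h1 hn2 e

lemma shrink (h0 : 0 < r) (h1 : r < 1) {E : Multiset ℕ} {j : ℕ} (hj : 1 ≤ j)
    (hc : r.den ≤ E.count j) :
    ∃ F : Multiset ℕ, (F.map (fun e => r ^ e)).sum = (E.map (fun e => r ^ e)).sum ∧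
      Multiset.card F + (r.den - r.num) = Multiset.card E := by
  obtain ⟨m, rfl⟩ : ∃ m, j = m + 1 := ⟨j - 1, by omega⟩
  set R := Multiset.replicate r.den (m + 1) with hR
  have hle : R ≤ E := Multiset.le_count_iff_replicate_le.mp hc
  refine ⟨(E - R) + Multiset.replicate r.num m, ?_, ?_⟩
  · have hER : E - R + R = E := tsub_add_cancel_of_le hle
    have hkey : ((Multiset.replicate r.num m).map (fun e => r ^ e)).sum
        = (R.map (fun e => r ^ e)).sum := by
      rw [hR, Multiset.map_replicate, Multiset.sum_replicate, Multiset.map_replicate,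
        Multiset.sum_replicate, nsmul_eq_mul, nsmul_eq_mul, pow_succ,
        show ((r.den:ℚ≥0)) * (r ^ m * r) = (r * (r.den:ℚ≥0)) * r ^ m by ring, mul_den h0]
    calc ((E - R + Multiset.replicate r.num m).map (fun e => r ^ e)).sum
        = ((E - R).map (fun e => r ^ e)).sum
            + ((Multiset.replicate r.num m).map (fun e => r ^ e)).sum := by
          rw [Multiset.map_add, Multiset.sum_add]
      _ = ((E - R).map (fun e => r ^ e)).sum + (R.map (fun e => r ^ e)).sum := by rw [hkey]
      _ = ((E - R + R).map (fun e => r ^ e)).sum := by rw [Multiset.map_add, Multiset.sum_add]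
      _ = (E.map (fun e => r ^ e)).sum := by rw [hER]
  · have h1' : Multiset.card (E - R) = Multiset.card E - r.den := by
      rw [Multiset.card_sub hle, hR, Multiset.card_replicate]
    have h2' : r.den ≤ Multiset.card E :=
      le_trans hc (Multiset.count_le_card (m + 1) E)
    have h3' := num_lt_den h0 h1
    simp only [Multiset.card_add, h1', Multiset.card_replicate]
    omega

def Reduced (r : ℚ≥0) (E : Multiset ℕ) : Prop := ∀ j, 1 ≤ j → E.count j < r.den

lemma exists_reduced (h0 : 0 < r) (h1 : r < 1) (E : Multiset ℕ) :
    ∃ F : Multiset ℕ, (F.map (fun e => r ^ e)).sum = (E.map (fun e => r ^ e)).sum ∧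
      Multiset.card F ≤ Multiset.card E ∧ Reduced r F := by
  have hδ : 0 < r.den - r.num := by have := num_lt_den h0 h1; omega
  suffices H : ∀ c : ℕ, ∀ E : Multiset ℕ, Multiset.card E = c →
      ∃ F : Multiset ℕ, (F.map (fun e => r ^ e)).sum = (E.map (fun e => r ^ e)).sum ∧
        Multiset.card F ≤ Multiset.card E ∧ Reduced r F from H _ E rfl
  intro c
  induction c using Nat.strong_induction_on with
  | _ c ih =>
    intro E hcE
    by_cases hred : Reduced r E
    · exact ⟨E, rfl, le_rfl, hred⟩
    · simp only [Reduced, not_forall, not_lt] at hred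
      obtain ⟨j, hj, hc⟩ := hred
      obtain ⟨F, hsum, hcard⟩ := shrink h0 h1 hj hc
      have hlt : Multiset.card F < c := by omega
      obtain ⟨G, hG1, hG2, hG3⟩ := ih (Multiset.card F) hlt F rfl
      exact ⟨G, hG1.trans hsum, by omega, hG3⟩


variable {r : ℚ≥0}

lemma filter_bound {E : Multiset ℕ} {K : ℕ} (hE : ∀ e ∈ E, e ≤ K + 1) :
    ∀ e ∈ E.filter (fun e => ¬ K + 1 = e), e ≤ K := by
  intro e he
  rw [Multiset.mem_filter] at he
  have := hE e he.1
  have := he.2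
  omega

lemma count_mod (h0 : 0 < r) {K : ℕ} (E : Multiset ℕ) (hE : ∀ e ∈ E, e ≤ K + 1) :
    (E.map (fun e => r.num ^ e * r.den ^ (K + 1 - e))).sum
      ≡ E.count (K + 1) * r.num ^ (K + 1) [MOD r.den] := by
  classical
  have hsplit : E.filter (fun e => K + 1 = e) + E.filter (fun e => ¬ K + 1 = e) = E :=
    Multiset.filter_add_not _ _
  have heq : E.filter (fun e => K + 1 = e) = Multiset.replicate (E.count (K + 1)) (K + 1) :=
    Multiset.filter_eq E (K + 1)
  calc (E.map (fun e => r.num ^ e * r.den ^ (K + 1 - e))).sum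
      = ((E.filter (fun e => K + 1 = e)).map (fun e => r.num ^ e * r.den ^ (K + 1 - e))).sum
        + ((E.filter (fun e => ¬ K + 1 = e)).map
            (fun e => r.num ^ e * r.den ^ (K + 1 - e))).sum := by
        conv_lhs => rw [← hsplit]
        rw [Multiset.map_add, Multiset.sum_add]
    _ = E.count (K + 1) * r.num ^ (K + 1)
        + ((E.filter (fun e => ¬ K + 1 = e)).map
            (fun e => r.num ^ e * r.den ^ (K + 1 - e))).sum := by
        rw [heq, Multiset.map_replicate, Multiset.sum_replicate, Nat.sub_self, pow_zero,
          mul_one, smul_eq_mul]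
    _ ≡ E.count (K + 1) * r.num ^ (K + 1) + 0 [MOD r.den] := by
        refine (Nat.ModEq.refl _).add ((Nat.modEq_zero_iff_dvd).2 ?_)
        refine Multiset.dvd_sum ?_
        intro t ht
        rw [Multiset.mem_map] at ht
        obtain ⟨e, he, rfl⟩ := ht
        have heK : e ≤ K := filter_bound hE e he
        have : K + 1 - e = (K - e) + 1 := by omega
        rw [this, pow_succ]
        exact ⟨r.num ^ e * r.den ^ (K - e), by ring⟩
    _ = E.count (K + 1) * r.num ^ (K + 1) := add_zero _

lemma reduced_unique (h0 : 0 < r) (h1 : r < 1) :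
    ∀ K : ℕ, ∀ E F : Multiset ℕ, (∀ e ∈ E, e ≤ K) → (∀ e ∈ F, e ≤ K) →
      Reduced r E → Reduced r F →
      (E.map (fun e => r ^ e)).sum = (F.map (fun e => r ^ e)).sum → E = F := by
  intro K
  induction K with
  | zero =>
    intro E F hE hF _ _ hsum
    have hErep : E = Multiset.replicate (Multiset.card E) 0 :=
      Multiset.eq_replicate_card.2 (fun e he => Nat.le_zero.1 (hE e he))
    have hFrep : F = Multiset.replicate (Multiset.card F) 0 :=
      Multiset.eq_replicate_card.2 (fun e he => Nat.le_zero.1 (hF e he))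
    rw [hErep, hFrep, Multiset.map_replicate, Multiset.map_replicate, pow_zero,
      Multiset.sum_replicate, Multiset.sum_replicate, nsmul_eq_mul, nsmul_eq_mul,
      mul_one, mul_one] at hsum
    have hcard : Multiset.card E = Multiset.card F := by exact_mod_cast hsum
    rw [hErep, hFrep, hcard]
  | succ K ih =>
    intro E F hE hF hrE hrF hsum
    classical
    have hnat := nat_eq h0 (K + 1) hE hF hsum
    have hcE := count_mod h0 E hE
    have hcF := count_mod h0 F hF
    have hmod : E.count (K + 1) * r.num ^ (K + 1)
        ≡ F.count (K + 1) * r.num ^ (K + 1) [MOD r.den] :=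
      hcE.symm.trans (by rw [hnat]; exact hcF)
    have hcop : Nat.Coprime r.den (r.num ^ (K + 1)) :=
      (r.coprime_num_den.symm).pow_right _
    have hcnt : E.count (K + 1) = F.count (K + 1) := by
      have h' := Nat.ModEq.cancel_right_of_coprime hcop hmod
      have e1 : E.count (K + 1) < r.den := hrE (K + 1) (by omega)
      have e2 : F.count (K + 1) < r.den := hrF (K + 1) (by omega)
      calc E.count (K + 1) = E.count (K + 1) % r.den := (Nat.mod_eq_of_lt e1).symm
        _ = F.count (K + 1) % r.den := h'
        _ = F.count (K + 1) := Nat.mod_eq_of_lt e2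
    have hEsplit : Multiset.replicate (E.count (K + 1)) (K + 1)
        + E.filter (fun e => ¬ K + 1 = e) = E := by
      rw [← Multiset.filter_eq E (K + 1)]; exact Multiset.filter_add_not _ _
    have hFsplit : Multiset.replicate (E.count (K + 1)) (K + 1)
        + F.filter (fun e => ¬ K + 1 = e) = F := by
      rw [hcnt, ← Multiset.filter_eq F (K + 1)]; exact Multiset.filter_add_not _ _
    have hsum1 : ((E.filter (fun e => ¬ K + 1 = e)).map (fun e => r ^ e)).sum
        = ((F.filter (fun e => ¬ K + 1 = e)).map (fun e => r ^ e)).sum := by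
      have hE' : ((Multiset.replicate (E.count (K + 1)) (K + 1)
            + E.filter (fun e => ¬ K + 1 = e)).map (fun e => r ^ e)).sum
          = ((Multiset.replicate (E.count (K + 1)) (K + 1)
            + F.filter (fun e => ¬ K + 1 = e)).map (fun e => r ^ e)).sum := by
        rw [hEsplit, hFsplit]; exact hsum
      rw [Multiset.map_add, Multiset.sum_add, Multiset.map_add, Multiset.sum_add] at hE'
      exact add_left_cancel hE'
    have hrE₁ : Reduced r (E.filter (fun e => ¬ K + 1 = e)) := fun j hj =>
      lt_of_le_of_lt (Multiset.count_le_of_le j (Multiset.filter_le _ E)) (hrE j hj)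
    have hrF₁ : Reduced r (F.filter (fun e => ¬ K + 1 = e)) := fun j hj =>
      lt_of_le_of_lt (Multiset.count_le_of_le j (Multiset.filter_le _ F)) (hrF j hj)
    have hfin := ih _ _ (filter_bound hE) (filter_bound hF) hrE₁ hrF₁ hsum1
    rw [← hEsplit, ← hFsplit, hfin]


variable {r : ℚ≥0}

lemma step_down {S : AddSubmonoid ℚ≥0}
    (hS : S = AddSubmonoid.closure {q : ℚ≥0 | ∃ n : ℕ, q = r ^ n})
    (h0 : 0 < r) (h1 : r < 1) (hn2 : 2 ≤ r.num) {x : ℚ≥0} {ℓ L : ℕ}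
    (hℓ : ℓ ∈ PMlengths S x) (hL : L ∈ PMlengths S x) (hlt : ℓ < L) :
    ∃ m, m + (r.den - r.num) = L ∧ m ∈ PMlengths S x := by
  obtain ⟨E, hEsum, hEcard⟩ := (lengths_iff hS h0 h1 hn2).1 hL
  obtain ⟨F₀, hFsum, hFcard⟩ := (lengths_iff hS h0 h1 hn2).1 hℓ
  by_cases hred : Reduced r E
  · exfalso
    obtain ⟨F, hF1, hF2, hF3⟩ := exists_reduced h0 h1 F₀
    have hsum : (E.map (fun e => r ^ e)).sum = (F.map (fun e => r ^ e)).sum := by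
      rw [hEsum, hF1, hFsum]
    have hEq := reduced_unique h0 h1 (E.sup ⊔ F.sup) E F
      (fun e he => (Multiset.le_sup he).trans le_sup_left)
      (fun e he => (Multiset.le_sup he).trans le_sup_right) hred hF3 hsum
    have hcards : Multiset.card E = Multiset.card F := by rw [hEq]
    omega
  · simp only [Reduced, not_forall, not_lt] at hred
    obtain ⟨j, hj, hcnt⟩ := hred
    obtain ⟨F, hsum, hcard⟩ := shrink h0 h1 hj hcnt
    exact ⟨Multiset.card F, by omega,
      (lengths_iff hS h0 h1 hn2).2 ⟨F, by rw [hsum, hEsum], rfl⟩⟩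

end Stmt13Aux

theorem stmt13 (r : ℚ≥0) (h0 : 0 < r) (h1 : r < 1)
    (S : AddSubmonoid ℚ≥0)
    (hS : S = AddSubmonoid.closure {q : ℚ≥0 | ∃ n : ℕ, q = r ^ n})
    (hatomic : PMatomic S) :
    PMDelta S ⊆ {r.den - r.num} := by
  intro d' hd'
  have hn2 := Stmt13Aux.num_two hS h0 h1 hatomic
  have hδpos : 0 < r.den - r.num := by have := Stmt13Aux.num_lt_den h0 h1; omega
  simp only [PMDelta, Set.mem_iUnion, Set.mem_setOf_eq] at hd'
  obtain ⟨x, ⟨hxS, hx0⟩, hpos, ℓ, hℓ, hset⟩ := hd'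
  have hmem : ℓ + d' ∈ PMlengths S x ∩ Set.Icc ℓ (ℓ + d') := by
    rw [hset]
    exact Set.mem_insert_iff.2 (Or.inr rfl)
  have hL : ℓ + d' ∈ PMlengths S x := hmem.1
  obtain ⟨E, hE1, hE2⟩ := (Stmt13Aux.lengths_iff hS h0 h1 hn2).1 hℓ
  obtain ⟨F, hF1, hF2⟩ := (Stmt13Aux.lengths_iff hS h0 h1 hn2).1 hL
  have hcong : ℓ ≡ ℓ + d' [MOD r.den - r.num] := by
    have := Stmt13Aux.card_congr h0 h1 (hE1.trans hF1.symm)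
    rwa [hE2, hF2] at this
  have hdvd : (r.den - r.num) ∣ d' := by
    have := (Nat.modEq_iff_dvd' (Nat.le_add_right ℓ d')).1 hcong
    simpa using this
  have hδle : r.den - r.num ≤ d' := Nat.le_of_dvd hpos hdvd
  obtain ⟨m, hm1, hm2⟩ := Stmt13Aux.step_down hS h0 h1 hn2 hℓ hL (by omega)
  have hmIcc : m ∈ Set.Icc ℓ (ℓ + d') := ⟨by omega, by omega⟩
  have hmm : m ∈ ({ℓ, ℓ + d'} : Set ℕ) := by
    rw [← hset]; exact ⟨hm2, hmIcc⟩
  rcases Set.mem_insert_iff.1 hmm with h | h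
  · have : d' = r.den - r.num := by omega
    exact Set.mem_singleton_iff.2 this
  · rw [Set.mem_singleton_iff] at h
    omega
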